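/- In the algebra CSP_p, external choice distributes over probabilistic choice up to probabilistic ready trace equivalence: Σ_{i∈I} aᵢ.(⊕_{j∈J} πⱼ x_{ij}) ≈_O ⊕_{j∈J} πⱼ (Σ_{i∈I} aᵢ.x_{ij}). -/

import Mathlib

inductive Proc (A : Type) where
  | nd : List (A × Proc A) → Proc A
  | pr : List (ℝ × Proc A) → Proc A

namespace Proc

variable {A : Type} [DecidableEq A]

/-- The menu of a nondeterministic state: the set of initially enabled actions. -/
def menu : Proc A → Finset A
  | nd l => (l.map Prod.fst).toFinset
  | pr _ => ∅

/-- Deterministic action transition. -/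
def step : Proc A → A → Option (Proc A)
  | nd l, a => (l.find? (fun x => x.1 = a)).map Prod.snd
  | pr _, _ => none

/-- P¹ₛ(M) : the probability that the initial menu observed is M. -/
noncomputable def P1 : Proc A → Finset A → ℝ
  | nd l, M => if (l.map Prod.fst).toFinset = M then 1 else 0
  | pr l, M => (l.attach.map (fun x => x.1.1 * P1 x.1.2 M)).sum
termination_by p _ => sizeOf p
decreasing_by
  obtain ⟨⟨r, p⟩, hmem⟩ := x
  have h := List.sizeOf_lt_of_mem hmem
  simp at h ⊢
  omega

end Proc
/-- Flattening used when a probabilistic transition would lead to a probabilistic state. -/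
def flat {A : Type} (w : ℝ) : Proc A → List (ℝ × Proc A)
  | Proc.pr l => l.map (fun x => (w * x.1, x.2))
  | q => [(w, q)]

namespace Proc

variable {A : Type} [DecidableEq A]

/-- The derived process s_{(M,a)} : the process that `s` becomes, given that the
menu `M` was offered and the action `a ∈ M` was performed. -/
noncomputable def after : Proc A → Finset A → A → Option (Proc A)
  | nd l, M, a => if (l.map Prod.fst).toFinset = M then step (nd l) a else none
  | pr l, M, a =>
      let sel := l.filter (fun x => x.2.menu = M)
      let tot := (sel.map Prod.fst).sum
      let entries := sel.flatMap (fun x =>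
        match x.2.step a with
        | none => []
        | some q => flat (x.1 / tot) q)
      if entries.isEmpty then none else some (pr entries)

/-- The conditional ready-trace probability
`P_sⁿ(M | M₁,a₁,…,a_{n-1})`, where `none` represents undefinedness. -/
noncomputable def Pn : Proc A → List (Finset A × A) → Finset A → Option ℝ
  | s, [], M => some (P1 s M)
  | s, Ma :: rest, M =>
      if 0 < P1 s Ma.1 then (after s Ma.1 Ma.2).bind (fun s' => Pn s' rest M)
      else none

/-- Probabilistic ready trace equivalence `≈_O`. -/
noncomputable def RTEquiv (s t : Proc A) : Prop :=
  ∀ (tr : List (Finset A × A)) (M : Finset A), Pn s tr M = Pn t tr M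

/-- Well-formed process graphs: action-deterministic menus, probabilities in (0,1]
summing to one, and probabilistic transitions leading to nondeterministic states. -/
inductive WF : Proc A → Prop
  | nd (l : List (A × Proc A)) :
      (l.map Prod.fst).Nodup → (∀ x ∈ l, WF x.2) → WF (.nd l)
  | pr (l : List (ℝ × Proc A)) :
      (∀ x ∈ l, 0 < x.1 ∧ x.1 ≤ 1 ∧ ∃ l', x.2 = Proc.nd l') →
      (l.map Prod.fst).sum = 1 →
      (∀ x ∈ l, WF x.2) → WF (.pr l)

end Proc
/-- Syntax of the algebra CSP_p: empty process, action-guarded external choice,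
probabilistic choice, priority, lock-step parallel and parallel with
synchronization set L. -/
inductive CSPp (A : Type) where
  | delta : CSPp A
  | ext : List (A × CSPp A) → CSPp A
  | prob : List (ℝ × CSPp A) → CSPp A
  | theta : CSPp A → CSPp A
  | par : CSPp A → CSPp A → CSPp A
  | parL : Finset A → CSPp A → CSPp A → CSPp A

namespace Proc

variable {A : Type} [DecidableEq A]

/-- Flattening of a probabilistic branch, so that probabilistic transitions
lead to nondeterministic states. -/
def pflat (x : ℝ × Proc A) : List (ℝ × Proc A) :=
  match x.2 with
  | .pr l' => l'.map (fun z => (x.1 * z.1, z.2))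
  | q => [(x.1, q)]

variable [LT A] [DecidableRel ((· < ·) : A → A → Prop)]

/-- The list of branches of a menu that have maximal priority. -/
def maxBranches (l : List (A × Proc A)) : List (A × Proc A) :=
  l.filter (fun x => decide (¬ ∃ y ∈ l, x.1 < y.1))

/-- The priority operator Θ on process graphs: keep only the maximal-priority
actions of each menu. -/
inductive ThetaRel : Proc A → Proc A → Prop
  | nd (l m : List (A × Proc A)) :
      m.length = (maxBranches l).length →
      (∀ i (hi : i < (maxBranches l).length) (hi' : i < m.length),
        (m.get ⟨i, hi'⟩).1 = ((maxBranches l).get ⟨i, hi⟩).1) →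
      (∀ i (hi : i < (maxBranches l).length) (hi' : i < m.length),
        ThetaRel ((maxBranches l).get ⟨i, hi⟩).2 (m.get ⟨i, hi'⟩).2) →
      ThetaRel (.nd l) (.nd m)
  | pr (l m : List (ℝ × Proc A)) :
      m.length = l.length →
      (∀ i (hi : i < l.length) (hi' : i < m.length),
        (m.get ⟨i, hi'⟩).1 = (l.get ⟨i, hi⟩).1) →
      (∀ i (hi : i < l.length) (hi' : i < m.length),
        ThetaRel (l.get ⟨i, hi⟩).2 (m.get ⟨i, hi'⟩).2) →
      ThetaRel (.pr l) (.pr m)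

/-- The branches of `l` whose action is in `L` and can be matched by the menu `l'`. -/
def syncBranches (L : Finset A) (l l' : List (A × Proc A)) : List (A × Proc A) :=
  l.filter (fun x => decide (x.1 ∈ L) && (Proc.step (.nd l') x.1).isSome)

/-- The branches of `l` whose action is interleaved (not in `L`). -/
def freeBranches (L : Finset A) (l : List (A × Proc A)) : List (A × Proc A) :=
  l.filter (fun x => decide (x.1 ∉ L))

/-- `ParRel L p q r` : `r` is the parallel composition of `p` and `q` that
synchronizes on the actions in `L` and interleaves all other actions. -/
inductive ParRel (L : Finset A) : Proc A → Proc A → Proc A → Prop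
  | ndnd (l l' : List (A × Proc A)) (m₁ m₂ m₃ : List (A × Proc A)) :
      m₁.length = (syncBranches L l l').length →
      (∀ i (hi : i < (syncBranches L l l').length) (hi' : i < m₁.length),
        (m₁.get ⟨i, hi'⟩).1 = ((syncBranches L l l').get ⟨i, hi⟩).1) →
      (∀ i (hi : i < (syncBranches L l l').length) (hi' : i < m₁.length) q',
        Proc.step (.nd l') ((syncBranches L l l').get ⟨i, hi⟩).1 = some q' →
        ParRel L ((syncBranches L l l').get ⟨i, hi⟩).2 q' (m₁.get ⟨i, hi'⟩).2) →
      m₂.length = (freeBranches L l).length →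
      (∀ i (hi : i < (freeBranches L l).length) (hi' : i < m₂.length),
        (m₂.get ⟨i, hi'⟩).1 = ((freeBranches L l).get ⟨i, hi⟩).1) →
      (∀ i (hi : i < (freeBranches L l).length) (hi' : i < m₂.length),
        ParRel L ((freeBranches L l).get ⟨i, hi⟩).2 (.nd l') (m₂.get ⟨i, hi'⟩).2) →
      m₃.length = (freeBranches L l').length →
      (∀ i (hi : i < (freeBranches L l').length) (hi' : i < m₃.length),
        (m₃.get ⟨i, hi'⟩).1 = ((freeBranches L l').get ⟨i, hi⟩).1) →
      (∀ i (hi : i < (freeBranches L l').length) (hi' : i < m₃.length),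
        ParRel L (.nd l) ((freeBranches L l').get ⟨i, hi⟩).2 (m₃.get ⟨i, hi'⟩).2) →
      ParRel L (.nd l) (.nd l') (.nd (m₁ ++ m₂ ++ m₃))
  | prnd (l : List (ℝ × Proc A)) (q : Proc A) (m : List (ℝ × Proc A)) :
      (∀ l', q ≠ .pr l') →
      m.length = l.length →
      (∀ i (hi : i < l.length) (hi' : i < m.length),
        (m.get ⟨i, hi'⟩).1 = (l.get ⟨i, hi⟩).1) →
      (∀ i (hi : i < l.length) (hi' : i < m.length),
        ParRel L (l.get ⟨i, hi⟩).2 q (m.get ⟨i, hi'⟩).2) →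
      ParRel L (.pr l) q (.pr m)
  | ndpr (q : Proc A) (l' : List (ℝ × Proc A)) (m : List (ℝ × Proc A)) :
      (∀ l'', q ≠ .pr l'') →
      m.length = l'.length →
      (∀ i (hi : i < l'.length) (hi' : i < m.length),
        (m.get ⟨i, hi'⟩).1 = (l'.get ⟨i, hi⟩).1) →
      (∀ i (hi : i < l'.length) (hi' : i < m.length),
        ParRel L q (l'.get ⟨i, hi⟩).2 (m.get ⟨i, hi'⟩).2) →
      ParRel L q (.pr l') (.pr m)
  | prpr (l l' : List (ℝ × Proc A)) (m : List (ℝ × Proc A)) :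
      m.length = (l.flatMap (fun x => l'.map (fun x' => (x, x')))).length →
      (∀ i (hi : i < (l.flatMap (fun x => l'.map (fun x' => (x, x')))).length)
          (hi' : i < m.length),
        (m.get ⟨i, hi'⟩).1 =
          ((l.flatMap (fun x => l'.map (fun x' => (x, x')))).get ⟨i, hi⟩).1.1 *
          ((l.flatMap (fun x => l'.map (fun x' => (x, x')))).get ⟨i, hi⟩).2.1) →
      (∀ i (hi : i < (l.flatMap (fun x => l'.map (fun x' => (x, x')))).length)
          (hi' : i < m.length),
        ParRel L ((l.flatMap (fun x => l'.map (fun x' => (x, x')))).get ⟨i, hi⟩).1.2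
          ((l.flatMap (fun x => l'.map (fun x' => (x, x')))).get ⟨i, hi⟩).2.2
          (m.get ⟨i, hi'⟩).2) →
      ParRel L (.pr l) (.pr l') (.pr m)

variable [Fintype A]

/-- `Den p q` : the process graph `q` is the operational-semantics denotation of
the CSP_p term `p` (per the SOS rules of the paper). -/
inductive Den : CSPp A → Proc A → Prop
  | delta : Den .delta (.nd [])
  | ext (l : List (A × CSPp A)) (m : List (A × Proc A)) :
      m.length = l.length →
      (∀ i (hi : i < l.length) (hi' : i < m.length),
        (m.get ⟨i, hi'⟩).1 = (l.get ⟨i, hi⟩).1) →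
      (∀ i (hi : i < l.length) (hi' : i < m.length),
        Den (l.get ⟨i, hi⟩).2 (m.get ⟨i, hi'⟩).2) →
      Den (.ext l) (.nd m)
  | prob (l : List (ℝ × CSPp A)) (m : List (ℝ × Proc A)) :
      m.length = l.length →
      (∀ i (hi : i < l.length) (hi' : i < m.length),
        (m.get ⟨i, hi'⟩).1 = (l.get ⟨i, hi⟩).1) →
      (∀ i (hi : i < l.length) (hi' : i < m.length),
        Den (l.get ⟨i, hi⟩).2 (m.get ⟨i, hi'⟩).2) →
      Den (.prob l) (.pr (m.flatMap pflat))
  | theta (p : CSPp A) (q q' : Proc A) :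
      Den p q → ThetaRel q q' → Den (.theta p) q'
  | par (p₁ p₂ : CSPp A) (q₁ q₂ r : Proc A) :
      Den p₁ q₁ → Den p₂ q₂ → ParRel Finset.univ q₁ q₂ r → Den (.par p₁ p₂) r
  | parL (L : Finset A) (p₁ p₂ : CSPp A) (q₁ q₂ r : Proc A) :
      Den p₁ q₁ → Den p₂ q₂ → ParRel L q₁ q₂ r → Den (.parL L p₁ p₂) r

/-- Probabilistic ready trace equivalence `≈_O` on CSP_p terms. -/
def CSPEquiv (s t : CSPp A) : Prop :=
  ∀ ps pt : Proc A, Den s ps → Den t pt → RTEquiv ps pt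

end Proc

namespace CSPp

variable {A : Type}

/-- Well-formed CSP_p terms: distinct actions in external choices and
probabilities in (0,1] summing to one in probabilistic choices. -/
inductive WFt : CSPp A → Prop
  | delta : WFt .delta
  | ext (l : List (A × CSPp A)) :
      (l.map Prod.fst).Nodup → (∀ x ∈ l, WFt x.2) → WFt (.ext l)
  | prob (l : List (ℝ × CSPp A)) :
      (∀ x ∈ l, 0 < x.1 ∧ x.1 ≤ 1) → (l.map Prod.fst).sum = 1 →
      (∀ x ∈ l, WFt x.2) → WFt (.prob l)
  | theta (p : CSPp A) : WFt p → WFt (.theta p)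
  | par (p q : CSPp A) : WFt p → WFt q → WFt (.par p q)
  | parL (L : Finset A) (p q : CSPp A) : WFt p → WFt q → WFt (.parL L p q)

end CSPp

namespace Proc
variable {A : Type} [DecidableEq A] [LT A] [DecidableRel ((· < ·) : A → A → Prop)]

theorem thetaRel_unique : ∀ {p q : Proc A}, ThetaRel p q → ∀ {q'}, ThetaRel p q' → q = q' := by
  intro p q h
  induction h with
  | nd l m hlen hfst hsnd ih =>
    intro q' h'
    cases h' with
    | nd _ m' hlen' hfst' hsnd' =>
      congr 1
      apply List.ext_get (by omega)
      intro i h1 h2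
      have hi : i < (maxBranches l).length := by omega
      have e1 : (m.get ⟨i, h1⟩).1 = (m'.get ⟨i, h2⟩).1 := by
        rw [hfst i hi h1, hfst' i hi h2]
      have e2 : (m.get ⟨i, h1⟩).2 = (m'.get ⟨i, h2⟩).2 := ih i hi h1 (hsnd' i hi h2)
      exact Prod.ext e1 e2
  | pr l m hlen hfst hsnd ih =>
    intro q' h'
    cases h' with
    | pr _ m' hlen' hfst' hsnd' =>
      congr 1
      apply List.ext_get (by omega)
      intro i h1 h2
      have hi : i < l.length := by omega
      have e1 : (m.get ⟨i, h1⟩).1 = (m'.get ⟨i, h2⟩).1 := by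
        rw [hfst i hi h1, hfst' i hi h2]
      have e2 : (m.get ⟨i, h1⟩).2 = (m'.get ⟨i, h2⟩).2 := ih i hi h1 (hsnd' i hi h2)
      exact Prod.ext e1 e2
end Proc

set_option linter.unusedSectionVars false
namespace Proc
variable {A : Type} [DecidableEq A] [LT A] [DecidableRel ((· < ·) : A → A → Prop)]

theorem parRel_unique {L : Finset A} : ∀ {p q r : Proc A}, ParRel L p q r → ∀ {r'}, ParRel L p q r' → r = r' := by
  intro p q r h
  induction h with
  | ndnd l l' m₁ m₂ m₃ h1len h1fst h1snd h2len h2fst h2snd h3len h3fst h3snd ih1 ih2 ih3 =>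
    intro r' h'
    cases h' with
    | ndnd _ _ n₁ n₂ n₃ g1len g1fst g1snd g2len g2fst g2snd g3len g3fst g3snd =>
      have e1 : m₁ = n₁ := by
        apply List.ext_get (by omega)
        intro i ha hb
        have hi : i < (syncBranches L l l').length := by omega
        refine Prod.ext (by rw [h1fst i hi ha, g1fst i hi hb]) ?_
        have hstep : (Proc.step (.nd l') ((syncBranches L l l').get ⟨i, hi⟩).1).isSome := by
          have hmem := List.get_mem (syncBranches L l l') ⟨i, hi⟩
          have := List.of_mem_filter hmem
          simp only [Bool.and_eq_true, decide_eq_true_eq] at this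
          exact this.2
        obtain ⟨q', hq'⟩ := Option.isSome_iff_exists.mp hstep
        exact ih1 i hi ha q' hq' (g1snd i hi hb q' hq')
      have e2 : m₂ = n₂ := by
        apply List.ext_get (by omega)
        intro i ha hb
        have hi : i < (freeBranches L l).length := by omega
        exact Prod.ext (by rw [h2fst i hi ha, g2fst i hi hb]) (ih2 i hi ha (g2snd i hi hb))
      have e3 : m₃ = n₃ := by
        apply List.ext_get (by omega)
        intro i ha hb
        have hi : i < (freeBranches L l').length := by omega
        exact Prod.ext (by rw [h3fst i hi ha, g3fst i hi hb]) (ih3 i hi ha (g3snd i hi hb))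
      rw [e1, e2, e3]
  | prnd l q m hq hlen hfst hsnd ih =>
    intro r' h'
    cases h' with
    | prnd _ _ m' hq' hlen' hfst' hsnd' =>
      congr 1
      apply List.ext_get (by omega)
      intro i ha hb
      have hi : i < l.length := by omega
      exact Prod.ext (by rw [hfst i hi ha, hfst' i hi hb]) (ih i hi ha (hsnd' i hi hb))
    | ndpr _ l'' m' hq' => exact absurd rfl (hq' l)
    | prpr l2 l'' m' => exact absurd rfl (hq l'')
  | ndpr q l' m hq hlen hfst hsnd ih =>
    intro r' h'
    cases h' with
    | ndpr _ _ m' hq' hlen' hfst' hsnd' =>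
      congr 1
      apply List.ext_get (by omega)
      intro i ha hb
      have hi : i < l'.length := by omega
      exact Prod.ext (by rw [hfst i hi ha, hfst' i hi hb]) (ih i hi ha (hsnd' i hi hb))
    | prnd _ _ m' hq' => exact absurd rfl (hq' l')
    | prpr l2 l'' m' => exact absurd rfl (hq l2)
  | prpr l l' m hlen hfst hsnd ih =>
    intro r' h'
    cases h' with
    | prpr _ _ m' hlen' hfst' hsnd' =>
      congr 1
      apply List.ext_get (by omega)
      intro i ha hb
      have hi : i < (l.flatMap (fun x => l'.map (fun x' => (x, x')))).length := by omega
      exact Prod.ext (by rw [hfst i hi ha, hfst' i hi hb]) (ih i hi ha (hsnd' i hi hb))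
    | prnd _ _ m' hq' => exact absurd rfl (hq' l')
    | ndpr _ _ m' hq' => exact absurd rfl (hq' l)
end Proc

namespace Proc
variable {A : Type} [DecidableEq A] [LT A] [DecidableRel ((· < ·) : A → A → Prop)] [Fintype A]

theorem den_unique : ∀ {p : CSPp A} {q : Proc A}, Den p q → ∀ {q'}, Den p q' → q = q' := by
  intro p q h
  induction h with
  | delta => intro q' h'; cases h'; rfl
  | ext l m hlen hfst hsnd ih =>
    intro q' h'
    cases h' with
    | ext _ m' hlen' hfst' hsnd' =>
      congr 1
      apply List.ext_get (by omega)
      intro i ha hb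
      have hi : i < l.length := by omega
      exact Prod.ext (by rw [hfst i hi ha, hfst' i hi hb]) (ih i hi ha (hsnd' i hi hb))
  | prob l m hlen hfst hsnd ih =>
    intro q' h'
    cases h' with
    | prob _ m' hlen' hfst' hsnd' =>
      have : m = m' := by
        apply List.ext_get (by omega)
        intro i ha hb
        have hi : i < l.length := by omega
        exact Prod.ext (by rw [hfst i hi ha, hfst' i hi hb]) (ih i hi ha (hsnd' i hi hb))
      rw [this]
  | theta p q r hden hth ih =>
    intro q' h'
    cases h' with
    | theta _ q₂ _ hden' hth' =>
      have : q = q₂ := ih hden'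
      subst this
      exact thetaRel_unique hth hth'
  | par p₁ p₂ q₁ q₂ r h1 h2 hpar ih1 ih2 =>
    intro r' h'
    cases h' with
    | par _ _ q₁' q₂' _ h1' h2' hpar' =>
      have e1 : q₁ = q₁' := ih1 h1'
      have e2 : q₂ = q₂' := ih2 h2'
      subst e1; subst e2
      exact parRel_unique hpar hpar'
  | parL L p₁ p₂ q₁ q₂ r h1 h2 hpar ih1 ih2 =>
    intro r' h'
    cases h' with
    | parL _ _ _ q₁' q₂' _ h1' h2' hpar' =>
      have e1 : q₁ = q₁' := ih1 h1'
      have e2 : q₂ = q₂' := ih2 h2'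
      subst e1; subst e2
      exact parRel_unique hpar hpar'
end Proc

namespace Proc
variable {A : Type} [DecidableEq A] [LT A] [DecidableRel ((· < ·) : A → A → Prop)] [Fintype A]

omit [Fintype A] in
theorem pflat_ne_nil {x : ℝ × Proc A} (h : ∀ l', x.2 = Proc.pr l' → l' ≠ []) :
    pflat x ≠ [] := by
  unfold pflat
  cases hx : x.2 with
  | nd l0 => simp
  | pr l0 =>
    have : l0 ≠ [] := h l0 hx
    simpa using this

theorem den_pr_ne_nil : ∀ {p : CSPp A} {q : Proc A}, Den p q → CSPp.WFt p →
    ∀ l, q = .pr l → l ≠ [] := by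
  intro p q h
  induction h with
  | delta => intro _ l heq; exact absurd heq (by simp)
  | ext l m _ _ _ _ => intro _ l' heq; exact absurd heq (by simp)
  | prob l m hlen hfst hsnd ih =>
    intro hwf l' heq hnil
    cases hwf with
    | prob _ hbd hsum hwfs =>
      have hlpos : 0 < l.length := by
        rcases l with _ | ⟨x, xs⟩
        · simp at hsum
        · simp
      have hmpos : 0 < m.length := by omega
      have hx0 : pflat (m.get ⟨0, hmpos⟩) ≠ [] := by
        apply pflat_ne_nil
        exact ih 0 hlpos hmpos (hwfs _ (List.get_mem l ⟨0, hlpos⟩))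
      have heq' : m.flatMap pflat = l' := by injection heq
      rw [hnil] at heq'
      rw [List.flatMap_eq_nil_iff] at heq'
      exact hx0 (heq' _ (List.get_mem m ⟨0, hmpos⟩))
  | theta p q r hden hth ih =>
    intro hwf l' heq hnil
    cases hwf with
    | theta _ hwfp =>
      subst heq
      cases hth with
      | pr lq _ hlen _ _ =>
        have : lq ≠ [] := ih hwfp lq rfl
        rw [hnil] at hlen
        simp at hlen
        exact this (List.length_eq_zero_iff.mp hlen.symm)
  | par p₁ p₂ q₁ q₂ r h1 h2 hpar ih1 ih2 =>
    intro hwf l' heq hnil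
    cases hwf with
    | par _ _ hwf1 hwf2 =>
      subst heq
      cases hpar with
      | prnd lq _ _ _ hlen _ _ =>
        have : lq ≠ [] := ih1 hwf1 lq rfl
        rw [hnil] at hlen; simp at hlen
        exact this (List.length_eq_zero_iff.mp hlen.symm)
      | ndpr _ lq _ _ hlen _ _ =>
        have : lq ≠ [] := ih2 hwf2 lq rfl
        rw [hnil] at hlen; simp at hlen
        exact this (List.length_eq_zero_iff.mp hlen.symm)
      | prpr la lb _ hlen _ _ =>
        have ha : la ≠ [] := ih1 hwf1 la rfl
        have hb : lb ≠ [] := ih2 hwf2 lb rfl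
        rcases la with _ | ⟨x, xs⟩
        · exact ha rfl
        rcases lb with _ | ⟨y, ys⟩
        · exact hb rfl
        rw [hnil] at hlen
        simp at hlen
  | parL L p₁ p₂ q₁ q₂ r h1 h2 hpar ih1 ih2 =>
    intro hwf l' heq hnil
    cases hwf with
    | parL _ _ _ hwf1 hwf2 =>
      subst heq
      cases hpar with
      | prnd lq _ _ _ hlen _ _ =>
        have : lq ≠ [] := ih1 hwf1 lq rfl
        rw [hnil] at hlen; simp at hlen
        exact this (List.length_eq_zero_iff.mp hlen.symm)
      | ndpr _ lq _ _ hlen _ _ =>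
        have : lq ≠ [] := ih2 hwf2 lq rfl
        rw [hnil] at hlen; simp at hlen
        exact this (List.length_eq_zero_iff.mp hlen.symm)
      | prpr la lb _ hlen _ _ =>
        have ha : la ≠ [] := ih1 hwf1 la rfl
        have hb : lb ≠ [] := ih2 hwf2 lb rfl
        rcases la with _ | ⟨x, xs⟩
        · exact ha rfl
        rcases lb with _ | ⟨y, ys⟩
        · exact hb rfl
        rw [hnil] at hlen
        simp at hlen
end Proc

namespace Proc
variable {A : Type} [DecidableEq A] [LT A] [DecidableRel ((· < ·) : A → A → Prop)] [Fintype A]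

theorem den_ext_ofFn {n : ℕ} {f : Fin n → A × CSPp A} {ps : Proc A}
    (h : Den (.ext (List.ofFn f)) ps) :
    ∃ g : Fin n → Proc A, (∀ i, Den (f i).2 (g i)) ∧
      ps = .nd (List.ofFn fun i => ((f i).1, g i)) := by
  cases h with
  | ext _ m hlen hfst hsnd =>
    have hlf : (List.ofFn f).length = n := by simp
    have hlen' : m.length = n := by omega
    have hget : ∀ (i : ℕ) (hi : i < (List.ofFn f).length),
        (List.ofFn f).get ⟨i, hi⟩ = f ⟨i, by omega⟩ := by
      intro i hi
      simp [List.get_ofFn]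
    refine ⟨fun i => (m.get ⟨i.1, by omega⟩).2, ?_, ?_⟩
    · intro i
      have := hsnd i.1 (by omega) (by omega)
      rwa [hget i.1 (by omega)] at this
    · congr 1
      apply List.ext_get (by simp [hlen'])
      intro i h1 h2
      have hi : i < (List.ofFn f).length := by omega
      have e1 := hfst i hi h1
      rw [hget i hi] at e1
      refine Prod.ext ?_ ?_
      · rw [e1]; simp [List.get_ofFn]
      · simp only [List.get_ofFn]
        rfl

theorem den_prob_ofFn {n : ℕ} {f : Fin n → ℝ × CSPp A} {ps : Proc A}
    (h : Den (.prob (List.ofFn f)) ps) :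
    ∃ g : Fin n → Proc A, (∀ i, Den (f i).2 (g i)) ∧
      ps = .pr ((List.ofFn fun i => ((f i).1, g i)).flatMap pflat) := by
  cases h with
  | prob _ m hlen hfst hsnd =>
    have hlf : (List.ofFn f).length = n := by simp
    have hlen' : m.length = n := by omega
    have hget : ∀ (i : ℕ) (hi : i < (List.ofFn f).length),
        (List.ofFn f).get ⟨i, hi⟩ = f ⟨i, by omega⟩ := by
      intro i hi
      simp [List.get_ofFn]
    refine ⟨fun i => (m.get ⟨i.1, by omega⟩).2, ?_, ?_⟩
    · intro i
      have := hsnd i.1 (by omega) (by omega)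
      rwa [hget i.1 (by omega)] at this
    · have : m = List.ofFn (fun i => ((f i).1, (m.get ⟨i.1, by omega⟩).2)) := by
        apply List.ext_get (by simp [hlen'])
        intro i h1 h2
        have hi : i < (List.ofFn f).length := by omega
        have e1 := hfst i hi h1
        rw [hget i hi] at e1
        refine Prod.ext ?_ ?_
        · rw [e1]; simp [List.get_ofFn]
        · simp only [List.get_ofFn]
          rfl
      rw [← this]
end Proc

namespace Proc
variable {A : Type} [DecidableEq A]

theorem P1_nd (l : List (A × Proc A)) (M : Finset A) :
    P1 (Proc.nd l) M = if (l.map Prod.fst).toFinset = M then 1 else 0 := by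
  rw [P1]

theorem P1_pr (l : List (ℝ × Proc A)) (M : Finset A) :
    P1 (Proc.pr l) M = (l.map (fun x => x.1 * P1 x.2 M)).sum := by
  rw [P1, ← List.attach_map_val (l := l) (f := fun x => x.1 * P1 x.2 M)]

theorem pflat_eq_flat (x : ℝ × Proc A) : pflat x = flat x.1 x.2 := by
  rcases x with ⟨w, p⟩
  cases p <;> rfl

theorem flatMap_ofFn_congr {α β γ : Type*} {n : ℕ} (u : Fin n → α) (u' : Fin n → β)
    (f : α → List γ) (f' : β → List γ) (h : ∀ j, f (u j) = f' (u' j)) :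
    (List.ofFn u).flatMap f = (List.ofFn u').flatMap f' := by
  rw [List.flatMap_def, List.flatMap_def, List.map_ofFn, List.map_ofFn]
  have : f ∘ u = f' ∘ u' := funext fun j => h j
  rw [this]

theorem find?_pair {n : ℕ} {β : Type*} (a : Fin n → A) (ha : Function.Injective a)
    (v : Fin n → β) {b : A} (i₀ : Fin n) (hb : a i₀ = b) :
    (List.ofFn fun i => (a i, v i)).find? (fun x => x.1 = b) = some (a i₀, v i₀) := by
  have hmem : (a i₀, v i₀) ∈ List.ofFn fun i => (a i, v i) := by
    rw [List.mem_ofFn]; exact ⟨i₀, rfl⟩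
  have hsome : ((List.ofFn fun i => (a i, v i)).find? (fun x => x.1 = b)).isSome := by
    rw [List.find?_isSome]
    exact ⟨(a i₀, v i₀), hmem, by simp [hb]⟩
  obtain ⟨x, hx⟩ := Option.isSome_iff_exists.mp hsome
  have hxmem := List.mem_of_find?_eq_some hx
  have hxp := List.find?_some hx
  rw [List.mem_ofFn] at hxmem
  obtain ⟨i, hi⟩ := hxmem
  simp only [decide_eq_true_eq] at hxp
  have : a i = b := by rw [← hi] at hxp; exact hxp
  have : i = i₀ := ha (by rw [this, hb])
  rw [hx, ← hi, this]

theorem find?_pair_none {n : ℕ} {β : Type*} (a : Fin n → A) (v : Fin n → β) {b : A}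
    (hb : ∀ i, a i ≠ b) :
    (List.ofFn fun i => (a i, v i)).find? (fun x => x.1 = b) = none := by
  rw [List.find?_eq_none]
  intro x hx
  rw [List.mem_ofFn] at hx
  obtain ⟨i, hi⟩ := hx
  simp [← hi, hb i]
end Proc

namespace Proc
variable {A : Type} [DecidableEq A] [LT A] [DecidableRel ((· < ·) : A → A → Prop)]

theorem key_equiv {I J : ℕ} (hJ : 0 < J) (a : Fin I → A) (ha : Function.Injective a)
    (π : Fin J → ℝ) (hsum : ∑ j, π j = 1)
    (q : Fin I → Fin J → Proc A)
    (hq : ∀ i j l, q i j = .pr l → l ≠ []) :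
    RTEquiv
      (Proc.nd (List.ofFn fun i =>
        (a i, Proc.pr ((List.ofFn fun j => (π j, q i j)).flatMap pflat))))
      (Proc.pr (List.ofFn fun j =>
        (π j, Proc.nd (List.ofFn fun i => (a i, q i j))))) := by
  set v : Fin I → Proc A :=
    fun i => Proc.pr ((List.ofFn fun j => (π j, q i j)).flatMap pflat) with hv
  set w : Fin J → ℝ × Proc A :=
    fun j => (π j, Proc.nd (List.ofFn fun i => (a i, q i j))) with hw
  have hfstA : ∀ (u : Fin I → Proc A),
      (List.ofFn fun i => (a i, u i)).map Prod.fst = List.ofFn a := by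
    intro u; rw [List.map_ofFn]; rfl
  have hfstπ : ∀ (u : Fin J → Proc A),
      (List.ofFn fun j => (π j, u j)).map Prod.fst = List.ofFn π := by
    intro u; rw [List.map_ofFn]; rfl
  have hP1L : ∀ M, P1 (Proc.nd (List.ofFn fun i => (a i, v i))) M
      = if (List.ofFn a).toFinset = M then 1 else 0 := by
    intro M; rw [P1_nd, hfstA]
  have hP1R : ∀ M, P1 (Proc.pr (List.ofFn w)) M
      = if (List.ofFn a).toFinset = M then 1 else 0 := by
    intro M
    rw [P1_pr, List.map_ofFn, List.sum_ofFn]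
    have : ∀ j : Fin J, ((fun x => x.1 * P1 x.2 M) ∘ w) j
        = π j * (if (List.ofFn a).toFinset = M then 1 else 0) := by
      intro j
      simp only [Function.comp, hw, P1_nd, hfstA]
    rw [Finset.sum_congr rfl (fun j _ => this j)]
    by_cases hc : (List.ofFn a).toFinset = M <;>
      simp [hc, ← Finset.sum_mul, hsum]
  -- after computations
  have hafter : ∀ b, Proc.after (Proc.nd (List.ofFn fun i => (a i, v i)))
        ((List.ofFn a).toFinset) b
      = Proc.after (Proc.pr (List.ofFn w)) ((List.ofFn a).toFinset) b := by
    intro b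
    have hL : Proc.after (Proc.nd (List.ofFn fun i => (a i, v i)))
        ((List.ofFn a).toFinset) b
        = ((List.ofFn fun i => (a i, v i)).find? (fun x => x.1 = b)).map Prod.snd := by
      rw [after, hfstA, if_pos rfl, step]
    have hsel : (List.ofFn w).filter (fun x => x.2.menu = (List.ofFn a).toFinset)
        = List.ofFn w := by
      rw [List.filter_eq_self]
      intro x hx
      rw [List.mem_ofFn] at hx
      obtain ⟨j, hj⟩ := hx
      simp only [← hj, hw, menu, hfstA, decide_eq_true_eq]
    have htot : ((List.ofFn w).map Prod.fst).sum = 1 := by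
      have : (List.ofFn w).map Prod.fst = List.ofFn π := by
        rw [List.map_ofFn]; rfl
      rw [this, List.sum_ofFn, hsum]
    have hR : Proc.after (Proc.pr (List.ofFn w)) ((List.ofFn a).toFinset) b
        = (if ((List.ofFn w).flatMap (fun x =>
            match x.2.step b with
            | none => []
            | some q => flat (x.1 / 1) q)).isEmpty then none
          else some (Proc.pr ((List.ofFn w).flatMap (fun x =>
            match x.2.step b with
            | none => []
            | some q => flat (x.1 / 1) q)))) := by
      rw [after]
      simp only [hsel, htot]
    by_cases hb : ∃ i₀, a i₀ = b
    · obtain ⟨i₀, hi₀⟩ := hb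
      rw [hL, find?_pair a ha v i₀ hi₀]
      have hstepj : ∀ j : Fin J,
          (Proc.nd (List.ofFn fun i => (a i, q i j))).step b = some (q i₀ j) := by
        intro j
        rw [step, find?_pair a ha (fun i => q i j) i₀ hi₀]
        rfl
      have hentries : (List.ofFn w).flatMap (fun x =>
            match x.2.step b with
            | none => []
            | some q => flat (x.1 / 1) q)
          = (List.ofFn fun j => (π j, q i₀ j)).flatMap pflat := by
        apply flatMap_ofFn_congr
        intro j
        simp only [hw, hstepj j, div_one, pflat_eq_flat]
      rw [hR, hentries]
      have hne : (List.ofFn fun j => (π j, q i₀ j)).flatMap pflat ≠ [] := by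
        intro hnil
        rw [List.flatMap_eq_nil_iff] at hnil
        have hmem : (π ⟨0, hJ⟩, q i₀ ⟨0, hJ⟩) ∈ List.ofFn fun j => (π j, q i₀ j) := by
          rw [List.mem_ofFn]; exact ⟨⟨0, hJ⟩, rfl⟩
        exact pflat_ne_nil (fun l' h => hq i₀ ⟨0, hJ⟩ l' h) (hnil _ hmem)
      simp only [Option.map_some]
      rw [if_neg (by simpa using hne)]
    · push_neg at hb
      rw [hL, find?_pair_none a v hb]
      have hentries : (List.ofFn w).flatMap (fun x =>
            match x.2.step b with
            | none => []
            | some q => flat (x.1 / 1) q)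
          = (List.ofFn w).flatMap (fun _ => ([] : List (ℝ × Proc A))) := by
        apply flatMap_ofFn_congr
        intro j
        have : (Proc.nd (List.ofFn fun i => (a i, q i j))).step b = none := by
          rw [step, find?_pair_none a (fun i => q i j) hb]
          rfl
        simp only [hw, this]
      rw [hR, hentries]
      simp
  -- main induction over traces
  intro tr M
  cases tr with
  | nil =>
    simp only [Pn]
    rw [hP1L, hP1R]
  | cons Ma rest =>
    simp only [Pn]
    rw [hP1L, hP1R]
    by_cases hM : (List.ofFn a).toFinset = Ma.1
    · rw [if_pos hM, ← hM, hafter Ma.2]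
    · rw [if_neg hM]
      simp
end Proc

namespace Proc
variable {A : Type} [DecidableEq A]

theorem flatMap_pflat_singleton {n : ℕ} (u : Fin n → ℝ × Proc A)
    (h : ∀ j, pflat (u j) = [u j]) :
    (List.ofFn u).flatMap pflat = List.ofFn u := by
  have := flatMap_ofFn_congr u u pflat (fun y => [y]) (by intro j; rw [h j])
  rw [this, List.flatMap_singleton']
end Proc


/-- In CSP_p, external choice distributes over probabilistic choice up to
probabilistic ready trace equivalence:
`Σ_{i∈I} aᵢ.(⊕_{j∈J} πⱼ x_{ij}) ≈_O ⊕_{j∈J} πⱼ (Σ_{i∈I} aᵢ.x_{ij})`. -/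
theorem external_choice_distributes_over_prob_choice
    {A : Type} [DecidableEq A] [LT A]
    [DecidableRel ((· < ·) : A → A → Prop)] [Fintype A]
    {I J : ℕ} (a : Fin I → A) (ha : Function.Injective a)
    (π : Fin J → ℝ) (hπ : ∀ j, 0 < π j ∧ π j ≤ 1) (hsum : ∑ j, π j = 1)
    (x : Fin I → Fin J → CSPp A) (hx : ∀ i j, CSPp.WFt (x i j)) :
    Proc.CSPEquiv
      (CSPp.ext (List.ofFn fun i =>
        (a i, CSPp.prob (List.ofFn fun j => (π j, x i j)))))
      (CSPp.prob (List.ofFn fun j =>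
        (π j, CSPp.ext (List.ofFn fun i => (a i, x i j))))) := by
  have hJ : 0 < J := by
    rcases Nat.eq_zero_or_pos J with h | h
    · subst h; simp at hsum
    · exact h
  intro ps pt hps hpt
  obtain ⟨g, hg, hpsv⟩ := Proc.den_ext_ofFn hps
  have h2 : ∀ i, ∃ qi : Fin J → Proc A, (∀ j, Proc.Den (x i j) (qi j)) ∧
      g i = .pr ((List.ofFn fun j => (π j, qi j)).flatMap Proc.pflat) := by
    intro i
    exact Proc.den_prob_ofFn (hg i)
  choose q hqden hgval using h2
  obtain ⟨h, hh, hptv⟩ := Proc.den_prob_ofFn hpt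
  have h3 : ∀ j, ∃ qj : Fin I → Proc A, (∀ i, Proc.Den (x i j) (qj i)) ∧
      h j = .nd (List.ofFn fun i => (a i, qj i)) := by
    intro j
    exact Proc.den_ext_ofFn (hh j)
  choose q' hq'den hhval using h3
  have hqq : ∀ i j, q' j i = q i j := by
    intro i j
    exact (Proc.den_unique (hqden i j) (hq'den j i)).symm
  have hptv' : pt = Proc.pr (List.ofFn fun j =>
      (π j, Proc.nd (List.ofFn fun i => (a i, q i j)))) := by
    rw [hptv]
    have e2 : (List.ofFn fun j =>
          ((π j, CSPp.ext (List.ofFn fun i => (a i, x i j))).1, h j))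
        = List.ofFn fun j => (π j, Proc.nd (List.ofFn fun i => (a i, q i j))) := by
      congr 1
      funext j
      rw [hhval j]
      simp [hqq]
    rw [e2, Proc.flatMap_pflat_singleton]
    intro j
    rfl
  have hpsv' : ps = Proc.nd (List.ofFn fun i =>
      (a i, Proc.pr ((List.ofFn fun j => (π j, q i j)).flatMap Proc.pflat))) := by
    rw [hpsv]
    have e : (fun i => ((a i, CSPp.prob (List.ofFn fun j => (π j, x i j))).1, g i))
        = fun i => (a i, Proc.pr ((List.ofFn fun j => (π j, q i j)).flatMap Proc.pflat)) := by
      funext i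
      rw [hgval i]
    rw [e]
  rw [hpsv', hptv']
  exact Proc.key_equiv hJ a ha π hsum q
    (fun i j l heq => Proc.den_pr_ne_nil (hqden i j) (hx i j) l heq)
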